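/- Variational energy decrease with optimal sign choices: let H and P_1,…,P_m be Hermitian N×N complex matrices and ψ ∈ ℂ^N a unit vector. For each i, set c_i := ⟨ψ, i(P_iH − HP_i) ψ⟩ (a real number), choose μ_i ∈ {−1, +1} with μ_i c_i = |c_i|, and let G := Σ_{i=1}^m μ_i P_i. Then for every θ ≥ 0, ⟨ψ, exp(−iθG) H exp(iθG) ψ⟩ ≤ ⟨ψ, H ψ⟩ − θ · Σ_{i=1}^m |c_i| + 2 θ² ‖G‖² ‖H‖. -/

import Mathlib

set_option maxHeartbeats 1000000

open Matrix
open scoped Matrix.Norms.L2Operator ComplexConjugate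

/-- The quadratic form `⟨ψ, M ψ⟩ = Σ_j conj(ψ_j) (M ψ)_j`. -/
noncomputable def quadForm {N : ℕ} (M : Matrix (Fin N) (Fin N) ℂ) (ψ : Fin N → ℂ) : ℂ :=
  ∑ j, conj (ψ j) * (M *ᵥ ψ) j

noncomputable def quadLin {N : ℕ} (ψ : Fin N → ℂ) :
    Matrix (Fin N) (Fin N) ℂ →ₗ[ℂ] ℂ where
  toFun M := quadForm M ψ
  map_add' M₁ M₂ := by
    simp [quadForm, Matrix.add_mulVec, mul_add, Finset.sum_add_distrib]
  map_smul' a M := by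
    simp [quadForm, Matrix.smul_mulVec, Finset.mul_sum, mul_left_comm]

noncomputable def quadCLM {N : ℕ} (ψ : Fin N → ℂ) :
    Matrix (Fin N) (Fin N) ℂ →L[ℂ] ℂ :=
  LinearMap.toContinuousLinearMap (quadLin ψ)

lemma quadCLM_apply {N : ℕ} (ψ : Fin N → ℂ) (M : Matrix (Fin N) (Fin N) ℂ) :
    quadCLM ψ M = quadForm M ψ := rfl

lemma norm_quadForm_le {N : ℕ} (M : Matrix (Fin N) (Fin N) ℂ) (ψ : Fin N → ℂ)
    (hψ : ∑ j, ‖ψ j‖ ^ 2 = 1) : ‖quadForm M ψ‖ ≤ ‖M‖ := by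
  set x : EuclideanSpace ℂ (Fin N) := (WithLp.equiv 2 _).symm ψ with hx
  have hxnorm : ‖x‖ = 1 := by
    rw [EuclideanSpace.norm_eq]
    simp only [hx, WithLp.equiv_symm_apply, WithLp.ofLp_toLp]
    rw [hψ, Real.sqrt_one]
  have h1 : quadForm M ψ = inner ℂ x ((EuclideanSpace.equiv (Fin N) ℂ).symm (M *ᵥ ψ)) := by
    simp [quadForm, PiLp.inner_apply, RCLike.inner_apply, hx, mul_comm]
  rw [h1]
  calc ‖(inner ℂ x ((EuclideanSpace.equiv (Fin N) ℂ).symm (M *ᵥ ψ)) : ℂ)‖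
      ≤ ‖x‖ * ‖(EuclideanSpace.equiv (Fin N) ℂ).symm (M *ᵥ ψ)‖ := norm_inner_le_norm _ _
    _ ≤ ‖x‖ * (‖M‖ * ‖x‖) := by gcongr; exact M.l2_opNorm_mulVec x
    _ = ‖M‖ := by rw [hxnorm]; ring

lemma hasDerivAt_comp_ofReal {E : Type*} [NormedAddCommGroup E] [NormedSpace ℂ E]
    {e : ℂ → E} {e' : E} {z : ℝ} (hf : HasDerivAt e e' (z : ℂ)) :
    HasDerivAt (fun y : ℝ => e y) e' z := by
  simpa [Function.comp_def] using (hf.hasFDerivAt.restrictScalars ℝ).comp_hasDerivAt z Complex.ofRealCLM.hasDerivAt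

theorem variational_energy_decrease
    {N m : ℕ} (H : Matrix (Fin N) (Fin N) ℂ) (hH : H.IsHermitian)
    (P : Fin m → Matrix (Fin N) (Fin N) ℂ) (hP : ∀ i, (P i).IsHermitian)
    (ψ : Fin N → ℂ) (hψ : ∑ j, ‖ψ j‖ ^ 2 = 1)
    (c : Fin m → ℝ)
    (hc : ∀ i, (c i : ℂ) = quadForm (Complex.I • (P i * H - H * P i)) ψ)
    (μ : Fin m → ℝ) (hμ : ∀ i, μ i = 1 ∨ μ i = -1)
    (hμc : ∀ i, μ i * c i = |c i|)
    (G : Matrix (Fin N) (Fin N) ℂ) (hG : G = ∑ i, ((μ i : ℝ) : ℂ) • P i)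
    (θ : ℝ) (hθ : 0 ≤ θ) :
    (quadForm
        (NormedSpace.exp ((-(Complex.I * (θ : ℂ))) • G) * H *
          NormedSpace.exp ((Complex.I * (θ : ℂ)) • G)) ψ).re ≤
      (quadForm H ψ).re - θ * (∑ i, |c i|) + 2 * θ ^ 2 * ‖G‖ ^ 2 * ‖H‖ := by
  classical
  set A : Matrix (Fin N) (Fin N) ℂ := Complex.I • G with hA
  have hGherm : Gᴴ = G := by
    rw [hG, Matrix.conjTranspose_sum]
    refine Finset.sum_congr rfl fun i _ => ?_
    rw [Matrix.conjTranspose_smul, (hP i).eq, Complex.star_def, Complex.conj_ofReal]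
  have hAanti : Aᴴ = -A := by
    rw [hA, Matrix.conjTranspose_smul, hGherm, Complex.star_def, Complex.conj_I, neg_smul]
  -- the unitary group elements
  set u : ℝ → Matrix (Fin N) (Fin N) ℂ := fun t => NormedSpace.exp ((t : ℂ) • A) with hu
  set v : ℝ → Matrix (Fin N) (Fin N) ℂ := fun t => NormedSpace.exp ((t : ℂ) • (-A)) with hv
  have hu0 : u 0 = 1 := by simp [hu, NormedSpace.exp_zero]
  have hv0 : v 0 = 1 := by simp [hv, NormedSpace.exp_zero]
  have hvu : ∀ t, v t * u t = 1 := fun t => by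
    rw [hv, hu, ← Matrix.exp_add_of_commute]
    · simp
    · simpa using ((Commute.refl ((t : ℂ) • A)).neg_left)
  have hustar : ∀ t, (u t)ᴴ = v t := fun t => by
    rw [hu, hv, ← Matrix.exp_conjTranspose, Matrix.conjTranspose_smul, hAanti]
    norm_num
  have hone : ‖(1 : Matrix (Fin N) (Fin N) ℂ)‖ ≤ 1 := by
    rw [Matrix.cstar_norm_def, _root_.map_one]
    exact ContinuousLinearMap.norm_id_le
  have hunorm : ∀ t, ‖u t‖ ≤ 1 := by
    intro t
    have h1 : ‖(u t)ᴴ * u t‖ = ‖u t‖ * ‖u t‖ := Matrix.l2_opNorm_conjTranspose_mul_self _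
    rw [hustar, hvu] at h1
    nlinarith [norm_nonneg (u t), hone]
  have hvnorm : ∀ t, ‖v t‖ ≤ 1 := by
    intro t
    calc ‖v t‖ = ‖(u t)ᴴ‖ := by rw [hustar]
      _ = ‖u t‖ := Matrix.l2_opNorm_conjTranspose _
      _ ≤ 1 := hunorm t
  -- derivative facts
  have hdu : ∀ t : ℝ, HasDerivAt u (u t * A) t := fun t =>
    hasDerivAt_comp_ofReal (hasDerivAt_exp_smul_const (𝕂 := ℂ) A (t : ℂ))
  have hdv : ∀ t : ℝ, HasDerivAt v (v t * (-A)) t := fun t =>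
    hasDerivAt_comp_ofReal (hasDerivAt_exp_smul_const (𝕂 := ℂ) (-A) (t : ℂ))
  have hcommA : ∀ t, A * u t = u t * A := fun t =>
    (((Commute.refl A).smul_right (t : ℂ)).exp_right)
  set C : Matrix (Fin N) (Fin N) ℂ := H * A - A * H with hC
  set D : Matrix (Fin N) (Fin N) ℂ := C * A - A * C with hD
  -- sandwiched derivative computations
  have hsand : ∀ (M : Matrix (Fin N) (Fin N) ℂ), ∀ t : ℝ,
      HasDerivAt (fun s => v s * M * u s) (v t * (M * A - A * M) * u t) t := by
    intro M t
    have h1 := ((hdv t).mul_const M).mul (hdu t)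
    refine h1.congr_deriv ?_
    rw [← hcommA t]
    noncomm_ring
  -- the scalar functions
  set Φ : Matrix (Fin N) (Fin N) ℂ →L[ℂ] ℂ := quadCLM ψ with hΦ
  set f : ℝ → ℝ := fun t => (Φ (v t * H * u t)).re with hf
  set g : ℝ → ℝ := fun t => (Φ (v t * C * u t)).re with hg
  have hdf : ∀ t : ℝ, HasDerivAt f (g t) t := by
    intro t
    have h1 : HasDerivAt (fun s => Φ (v s * H * u s)) (Φ (v t * C * u t)) t :=
      ((Φ.restrictScalars ℝ).hasFDerivAt).comp_hasDerivAt t (hsand H t)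
    exact (Complex.reCLM.hasFDerivAt).comp_hasDerivAt t h1
  have hdg : ∀ t : ℝ, HasDerivAt g ((Φ (v t * D * u t)).re) t := by
    intro t
    have h1 : HasDerivAt (fun s => Φ (v s * C * u s)) (Φ (v t * D * u t)) t :=
      ((Φ.restrictScalars ℝ).hasFDerivAt).comp_hasDerivAt t (hsand C t)
    exact (Complex.reCLM.hasFDerivAt).comp_hasDerivAt t h1
  -- norms
  have hAnorm : ‖A‖ = ‖G‖ := by
    rw [hA, norm_smul, Complex.norm_I, one_mul]
  set M0 : ℝ := 4 * ‖G‖ ^ 2 * ‖H‖ with hM0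
  have hDnorm : ‖D‖ ≤ M0 := by
    have hCn : ‖C‖ ≤ 2 * ‖G‖ * ‖H‖ := by
      calc ‖C‖ ≤ ‖H * A‖ + ‖A * H‖ := norm_sub_le _ _
        _ ≤ ‖H‖ * ‖A‖ + ‖A‖ * ‖H‖ :=
            add_le_add (Matrix.l2_opNorm_mul _ _) (Matrix.l2_opNorm_mul _ _)
        _ = 2 * ‖G‖ * ‖H‖ := by rw [hAnorm]; ring
    calc ‖D‖ ≤ ‖C * A‖ + ‖A * C‖ := norm_sub_le _ _
      _ ≤ ‖C‖ * ‖A‖ + ‖A‖ * ‖C‖ :=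
          add_le_add (Matrix.l2_opNorm_mul _ _) (Matrix.l2_opNorm_mul _ _)
      _ = 2 * ‖A‖ * ‖C‖ := by ring
      _ ≤ 2 * ‖G‖ * (2 * ‖G‖ * ‖H‖) := by rw [hAnorm]; gcongr
      _ = M0 := by rw [hM0]; ring
  have hgbound : ∀ t : ℝ, |(Φ (v t * D * u t)).re| ≤ M0 := by
    intro t
    calc |(Φ (v t * D * u t)).re| ≤ ‖Φ (v t * D * u t)‖ := Complex.abs_re_le_norm _
      _ = ‖quadForm (v t * D * u t) ψ‖ := by rw [quadCLM_apply]
      _ ≤ ‖v t * D * u t‖ := norm_quadForm_le _ _ hψ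
      _ ≤ ‖v t * D‖ * ‖u t‖ := Matrix.l2_opNorm_mul _ _
      _ ≤ (‖v t‖ * ‖D‖) * ‖u t‖ := by gcongr; exact Matrix.l2_opNorm_mul _ _
      _ ≤ 1 * ‖D‖ * 1 :=
          mul_le_mul (mul_le_mul (hvnorm t) le_rfl (norm_nonneg D) zero_le_one)
            (hunorm t) (norm_nonneg _) (by positivity)
      _ = ‖D‖ := by ring
      _ ≤ M0 := hDnorm
  -- Lipschitz bound for g
  have hglip : ∀ t : ℝ, 0 ≤ t → g t - g 0 ≤ M0 * t := by
    intro t ht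
    have := Convex.norm_image_sub_le_of_norm_hasDerivWithin_le
      (f := g) (f' := fun s => (Φ (v s * D * u s)).re) (s := Set.univ) (C := M0)
      (fun x _ => (hdg x).hasDerivWithinAt) (fun x _ => hgbound x) convex_univ
      (Set.mem_univ 0) (Set.mem_univ t)
    rw [Real.norm_eq_abs, Real.norm_eq_abs, sub_zero, abs_of_nonneg ht] at this
    calc g t - g 0 ≤ |g t - g 0| := le_abs_self _
      _ ≤ M0 * t := this
  -- initial values
  have hf0 : f 0 = (quadForm H ψ).re := by
    rw [hf]; simp only [hu0, hv0, one_mul, mul_one]; rw [quadCLM_apply]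
  -- g 0 = -∑ |c i|
  have hg0 : g 0 = -∑ i, |c i| := by
    have hCsum : C = ∑ i, ((μ i : ℝ) : ℂ) • (-(Complex.I • (P i * H - H * P i))) := by
      rw [hC, hA, hG]
      simp only [Matrix.mul_sum, Matrix.sum_mul, Matrix.mul_smul, Matrix.smul_mul,
        Finset.smul_sum, ← Finset.sum_sub_distrib]
      refine Finset.sum_congr rfl fun i _ => ?_
      module
    have : Φ C = -∑ i, ((μ i : ℝ) : ℂ) * (c i : ℂ) := by
      rw [hCsum, map_sum]
      rw [← Finset.sum_neg_distrib]
      refine Finset.sum_congr rfl fun i _ => ?_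
      rw [_root_.map_smul, map_neg, smul_eq_mul, quadCLM_apply, ← hc i]
      ring
    rw [hg]; simp only [hu0, hv0, one_mul, mul_one]
    rw [this]
    push_cast
    simp only [Complex.neg_re, Complex.re_sum]
    congr 1
    refine Finset.sum_congr rfl fun i _ => ?_
    rw [← hμc i]
    simp [Complex.mul_re]
  -- Taylor-type bound via monotonicity
  set F : ℝ → ℝ := fun t => f 0 + t * g 0 + M0 * t ^ 2 / 2 - f t with hF
  have hdF : ∀ t : ℝ, HasDerivAt F (g 0 + M0 * t - g t) t := by
    intro t
    have h1 : HasDerivAt (fun s : ℝ => f 0 + s * g 0 + M0 * s ^ 2 / 2 - f s)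
        (0 + 1 * g 0 + M0 * (2 * t ^ 1) / 2 - g t) t := by
      exact (((hasDerivAt_const t (f 0)).add ((hasDerivAt_id t).mul_const (g 0))).add
        (((hasDerivAt_pow 2 t).const_mul M0).div_const 2)).sub (hdf t)
    convert h1 using 1
    ring
  have hFmono : MonotoneOn F (Set.Icc 0 θ) := by
    apply monotoneOn_of_deriv_nonneg (convex_Icc 0 θ)
    · exact (fun t _ => (hdF t).differentiableAt.continuousAt.continuousWithinAt)
    · exact fun t _ => ((hdF t).differentiableAt).differentiableWithinAt
    · intro t ht
      rw [interior_Icc] at ht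
      rw [(hdF t).deriv]
      have := hglip t ht.1.le
      linarith
  have hF0 : F 0 = 0 := by rw [hF]; simp
  have hkey : f θ ≤ f 0 + θ * g 0 + M0 * θ ^ 2 / 2 := by
    have := hFmono (Set.mem_Icc.2 ⟨le_refl 0, hθ⟩) (Set.mem_Icc.2 ⟨hθ, le_refl θ⟩) hθ
    rw [hF0] at this
    rw [hF] at this
    linarith
  -- identify the goal with f θ
  have hsc1 : (-(Complex.I * (θ : ℂ))) • G = ((θ : ℝ) : ℂ) • (-A) := by
    rw [hA, smul_neg, smul_smul, ← neg_smul]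
    congr 1
    ring
  have hsc2 : (Complex.I * (θ : ℂ)) • G = ((θ : ℝ) : ℂ) • A := by
    rw [hA, smul_smul]
    congr 1
    ring
  have hLHS : NormedSpace.exp ((-(Complex.I * (θ : ℂ))) • G) = v θ := by rw [hsc1]
  have hRHS : NormedSpace.exp ((Complex.I * (θ : ℂ)) • G) = u θ := by rw [hsc2]
  rw [hLHS, hRHS]
  have hgoal : (quadForm (v θ * H * u θ) ψ).re = f θ := rfl
  rw [hgoal]
  calc f θ ≤ f 0 + θ * g 0 + M0 * θ ^ 2 / 2 := hkey
    _ = (quadForm H ψ).re - θ * (∑ i, |c i|) + 2 * θ ^ 2 * ‖G‖ ^ 2 * ‖H‖ := by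
        rw [hf0, hg0, hM0]; ring
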